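/- arXiv:2004.09197 — 2 statements merged into one kernel-verified Lean document; each statement's English description precedes it below -/
import Mathlib

section
/- Let D be an N×N real matrix, d ∈ ℝᴺ, x ∈ ℝᴺ, V an N×K matrix with VᵀV invertible, P = V(VᵀV)⁻¹Vᵀ, R = D(P − I), and r = (P − I)x. If Δx ∈ ℝᴺ satisfies (D + R)Δx = −(d + Rx), then c = (VᵀV)⁻¹Vᵀ Δx satisfies (VᵀDV)c = −Vᵀ(d + Dr). -/
open Matrix

theorem stmt4 (N K : ℕ) (D : Matrix (Fin N) (Fin N) ℝ) (d x : Fin N → ℝ)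
    (V : Matrix (Fin N) (Fin K) ℝ) [Invertible (Vᵀ * V)]
    (P : Matrix (Fin N) (Fin N) ℝ) (hP : P = V * (Vᵀ * V)⁻¹ * Vᵀ)
    (R : Matrix (Fin N) (Fin N) ℝ) (hR : R = D * (P - 1))
    (r : Fin N → ℝ) (hr : r = (P - 1) *ᵥ x)
    (Δx : Fin N → ℝ) (hΔx : (D + R) *ᵥ Δx = -(d + R *ᵥ x))
    (c : Fin K → ℝ) (hc : c = ((Vᵀ * V)⁻¹ * Vᵀ) *ᵥ Δx) :
    (Vᵀ * D * V) *ᵥ c = -(Vᵀ *ᵥ (d + D *ᵥ r)) := by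
  have hDP : D + R = D * P := by
    rw [hR, Matrix.mul_sub, Matrix.mul_one]; abel
  have hRx : R *ᵥ x = D *ᵥ r := by
    rw [hR, hr, ← Matrix.mulVec_mulVec]
  calc (Vᵀ * D * V) *ᵥ c = Vᵀ *ᵥ ((D * P) *ᵥ Δx) := by
        rw [hc, hP]; simp only [Matrix.mulVec_mulVec, Matrix.mul_assoc]
    _ = -(Vᵀ *ᵥ (d + D *ᵥ r)) := by
        rw [← hDP, hΔx, hRx, Matrix.mulVec_neg]
end

section
/- Under the hypotheses of the previous statement, if additionally VᵀDV is invertible, then c = (VᵀV)⁻¹Vᵀ Δx equals −(VᵀDV)⁻¹ Vᵀ(d + Dr). -/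
open Matrix

theorem stmt5 (N K : ℕ) (D : Matrix (Fin N) (Fin N) ℝ) (d x : Fin N → ℝ)
    (V : Matrix (Fin N) (Fin K) ℝ) [Invertible (Vᵀ * V)]
    (P : Matrix (Fin N) (Fin N) ℝ) (hP : P = V * (Vᵀ * V)⁻¹ * Vᵀ)
    (R : Matrix (Fin N) (Fin N) ℝ) (hR : R = D * (P - 1))
    (r : Fin N → ℝ) (hr : r = (P - 1) *ᵥ x)
    (Δx : Fin N → ℝ) (hΔx : (D + R) *ᵥ Δx = -(d + R *ᵥ x))
    [Invertible (Vᵀ * D * V)] :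
    ((Vᵀ * V)⁻¹ * Vᵀ) *ᵥ Δx = -((Vᵀ * D * V)⁻¹ *ᵥ (Vᵀ *ᵥ (d + D *ᵥ r))) := by
  have key : Vᵀ * (D + R) = (Vᵀ * D * V) * ((Vᵀ * V)⁻¹ * Vᵀ) := by
    have h2 : D + D * (P - 1) = D * P := by rw [mul_sub, mul_one]; abel
    rw [hR, h2, hP]; simp only [Matrix.mul_assoc]
  have hRx : R *ᵥ x = D *ᵥ r := by
    rw [hR, hr, ← mulVec_mulVec]
  have h1 : (Vᵀ * D * V) *ᵥ (((Vᵀ * V)⁻¹ * Vᵀ) *ᵥ Δx) = -(Vᵀ *ᵥ (d + D *ᵥ r)) := by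
    rw [mulVec_mulVec, ← key, ← mulVec_mulVec, hΔx, mulVec_neg, hRx]
  calc ((Vᵀ * V)⁻¹ * Vᵀ) *ᵥ Δx
      = (Vᵀ * D * V)⁻¹ *ᵥ ((Vᵀ * D * V) *ᵥ (((Vᵀ * V)⁻¹ * Vᵀ) *ᵥ Δx)) := by
        rw [mulVec_mulVec, Matrix.inv_mul_of_invertible, one_mulVec]
    _ = -((Vᵀ * D * V)⁻¹ *ᵥ (Vᵀ *ᵥ (d + D *ᵥ r))) := by rw [h1, mulVec_neg]
end
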